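/- Let M be an n×n positive-definite Hermitian matrix and let 0 < t. Define E(t) = e^{tL} M e^{tL} where L is Hermitian with simple maximal eigenvalue ω and unit eigenvector u. Then e^{-2tω} E(t) converges as t → ∞ to ⟨u|M|u⟩ |u⟩⟨u|, and the maximal eigenvalue of e^{-2tω}E(t) converges to ⟨u|M|u⟩ exponentially fast in t. -/

import Mathlib

open scoped InnerProductSpace
open Filter

section Aux
variable {H : Type*} [NormedAddCommGroup H] [InnerProductSpace ℂ H] [CompleteSpace H]

lemma exp_eig (A : H →L[ℂ] H) (v : H) (c : ℂ) (h : A v = c • v) :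
    NormedSpace.exp A v = Complex.exp c • v := by
  have hpow : ∀ n : ℕ, (A ^ n) v = c ^ n • v := by
    intro n
    induction n with
    | zero => simp
    | succ n ih =>
      rw [pow_succ, ContinuousLinearMap.mul_apply, h, map_smul, ih, smul_smul, pow_succ,
        mul_comm]
  have hsum : Summable fun n : ℕ => ((Nat.factorial n : ℂ)⁻¹) • A ^ n :=
    NormedSpace.expSeries_summable' A
  have : NormedSpace.exp A v = ∑' n : ℕ, (((Nat.factorial n : ℂ)⁻¹) • A ^ n) v := by
    rw [NormedSpace.exp_eq_tsum ℂ]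
    exact ((ContinuousLinearMap.apply ℂ H v).map_tsum hsum)
  rw [this]
  have h2 : ∀ n : ℕ, (((Nat.factorial n : ℂ)⁻¹) • A ^ n) v
      = (((Nat.factorial n : ℂ)⁻¹) * c ^ n) • v := by
    intro n
    rw [ContinuousLinearMap.smul_apply, hpow, smul_smul]
  simp_rw [h2]
  rw [Summable.tsum_smul_const]
  · congr 1
    rw [Complex.exp_eq_exp_ℂ, NormedSpace.exp_eq_tsum ℂ]
    simp [smul_eq_mul]
  · have := NormedSpace.expSeries_summable' (𝕂 := ℂ) c
    simpa [smul_eq_mul] using this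

omit [CompleteSpace H] in
lemma onb_norm_sq {n : ℕ} (b : OrthonormalBasis (Fin n) ℂ H) (y : H) :
    ‖y‖ ^ 2 = ∑ i, ‖⟪b i, y⟫_ℂ‖ ^ 2 := by
  rw [← b.repr.norm_map y, EuclideanSpace.norm_eq, Real.sq_sqrt (by positivity)]
  simp_rw [b.repr_apply_apply]

omit [CompleteSpace H] in
lemma opnorm_bound {n : ℕ} (b : OrthonormalBasis (Fin n) ℂ H) (A : H →L[ℂ] H)
    (d : Fin n → ℂ) (hd : ∀ i x, ⟪b i, A x⟫_ℂ = d i * ⟪b i, x⟫_ℂ)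
    (r : ℝ) (hr : 0 ≤ r) (hdr : ∀ i, ‖d i‖ ≤ r) : ‖A‖ ≤ r := by
  refine ContinuousLinearMap.opNorm_le_bound A hr (fun x => ?_)
  have h1 : ‖A x‖ ^ 2 ≤ (r * ‖x‖) ^ 2 := by
    rw [onb_norm_sq b, mul_pow]
    calc ∑ i, ‖⟪b i, A x⟫_ℂ‖ ^ 2 = ∑ i, ‖d i‖ ^ 2 * ‖⟪b i, x⟫_ℂ‖ ^ 2 := by
          simp_rw [hd]; simp [mul_pow, norm_mul]
      _ ≤ ∑ i, r ^ 2 * ‖⟪b i, x⟫_ℂ‖ ^ 2 := by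
          gcongr with i
          exact hdr i
      _ = r ^ 2 * ‖x‖ ^ 2 := by rw [← Finset.mul_sum, ← onb_norm_sq b]
  exact le_of_pow_le_pow_left₀ two_ne_zero (by positivity) h1

end Aux

set_option maxHeartbeats 1000000 in
/-- Let `M` be positive-definite Hermitian and `L` Hermitian with simple
maximal eigenvalue `ω` and unit eigenvector `u`.  With `E(t) = e^{tL} M e^{tL}`, the
operator `e^{-2tω} E(t)` converges as `t → ∞` to `⟨u|M|u⟩ |u⟩⟨u|`, and its maximal
eigenvalue (= operator norm of a positive semidefinite operator) converges to `⟨u|M|u⟩`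
exponentially fast in `t`. -/
theorem stmt19 {H : Type*} [NormedAddCommGroup H] [InnerProductSpace ℂ H]
    [FiniteDimensional ℂ H] [CompleteSpace H]
    (M : H →L[ℂ] H) (hM : IsSelfAdjoint M) (hMpos : ∀ x : H, x ≠ 0 → 0 < (⟪x, M x⟫_ℂ).re)
    (L : H →L[ℂ] H) (hL : IsSelfAdjoint L)
    (ω : ℝ) (u : H) (hu : ‖u‖ = 1) (hev : L u = (ω : ℂ) • u)
    (hsimple : Module.End.eigenspace (L : Module.End ℂ H) (ω : ℂ) = Submodule.span ℂ {u})
    (hmax : ∀ μ : ℂ, Module.End.HasEigenvalue (L : Module.End ℂ H) μ → μ.re ≤ ω)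
    (E : ℝ → (H →L[ℂ] H))
    (hE : ∀ t : ℝ, E t = NormedSpace.exp (t • L) * M * NormedSpace.exp (t • L)) :
    Tendsto (fun t : ℝ => Real.exp (-2 * t * ω) • E t) atTop
      (nhds (⟪u, M u⟫_ℂ • (innerSL ℂ u).smulRight u)) ∧
    ∃ C γ : ℝ, 0 < γ ∧ ∀ t : ℝ, 0 ≤ t →
      |‖Real.exp (-2 * t * ω) • E t‖ - (⟪u, M u⟫_ℂ).re| ≤ C * Real.exp (-γ * t) := by
  classical
  have hune : u ≠ 0 := by
    intro h; rw [h, norm_zero] at hu; exact one_ne_zero hu.symm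
  have hLs : (↑L : H →ₗ[ℂ] H).IsSymmetric := hL.isSymmetric
  set n := Module.finrank ℂ H with hndef
  have hn : Module.finrank ℂ H = n := rfl
  set b : OrthonormalBasis (Fin n) ℂ H := hLs.eigenvectorBasis hn with hbdef
  set μ : Fin n → ℝ := hLs.eigenvalues hn with hμdef
  have hbev : ∀ i, L (b i) = ((μ i : ℂ)) • b i := fun i => hLs.apply_eigenvectorBasis hn i
  have hbnorm : ∀ i, ‖b i‖ = 1 := fun i => b.orthonormal.1 i
  have hbne : ∀ i, b i ≠ 0 := by
    intro i h; have := hbnorm i; rw [h, norm_zero] at this; exact one_ne_zero this.symm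
  have hbij : ∀ i j, i ≠ j → ⟪b i, b j⟫_ℂ = 0 := fun i j hij => b.orthonormal.2 hij
  -- eigenvalues are at most ω
  have hμle : ∀ i, μ i ≤ ω := by
    intro i
    have h1 := hLs.hasEigenvalue_eigenvalues hn i
    have := hmax ((μ i : ℂ)) h1
    simpa using this
  -- inner products of b i with u
  have hinner : ∀ i, ((μ i : ℂ) - (ω : ℂ)) * ⟪b i, u⟫_ℂ = 0 := by
    intro i
    have h1 : ⟪b i, L u⟫_ℂ = (ω : ℂ) * ⟪b i, u⟫_ℂ := by
      rw [hev, inner_smul_right]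
    have h2 : ⟪b i, L u⟫_ℂ = (μ i : ℂ) * ⟪b i, u⟫_ℂ := by
      have h3 := hLs (b i) u
      simp only [ContinuousLinearMap.coe_coe] at h3
      rw [← h3, hbev i, inner_smul_left, Complex.conj_ofReal]
    linear_combination h1 - h2
  -- existence of the top index
  obtain ⟨i0, hi0⟩ : ∃ i, ⟪b i, u⟫_ℂ ≠ 0 := by
    by_contra hcon
    push_neg at hcon
    have := b.sum_repr' u
    simp only [hcon, zero_smul, Finset.sum_const_zero] at this
    exact hune this.symm
  have hμi0 : μ i0 = ω := by
    have := hinner i0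
    rcases mul_eq_zero.mp this with h | h
    · have : (μ i0 : ℂ) = (ω : ℂ) := by linear_combination h
      exact_mod_cast this
    · exact absurd h hi0
  -- b i0 is a multiple of u
  have hbi0mem : b i0 ∈ Submodule.span ℂ {u} := by
    rw [← hsimple]
    rw [Module.End.mem_eigenspace_iff]
    show L (b i0) = _
    rw [hbev i0, hμi0]
  obtain ⟨a, ha⟩ := Submodule.mem_span_singleton.mp hbi0mem
  have hane : a ≠ 0 := by
    intro h; rw [h, zero_smul] at ha; exact hbne i0 ha.symm
  -- orthogonality of other basis vectors to u
  have horthu : ∀ i, i ≠ i0 → ⟪b i, u⟫_ℂ = 0 := by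
    intro i hi
    have hu' : u = a⁻¹ • b i0 := by rw [← ha, smul_smul, inv_mul_cancel₀ hane, one_smul]
    rw [hu', inner_smul_right, hbij i i0 hi, mul_zero]
  -- strict gap for i ≠ i0
  have hμlt : ∀ i, i ≠ i0 → μ i < ω := by
    intro i hi
    rcases lt_or_eq_of_le (hμle i) with h | h
    · exact h
    · exfalso
      have hmem : b i ∈ Submodule.span ℂ {u} := by
        rw [← hsimple, Module.End.mem_eigenspace_iff]
        show L (b i) = _
        rw [hbev i, h]
      obtain ⟨a', ha'⟩ := Submodule.mem_span_singleton.mp hmem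
      have ha'ne : a' ≠ 0 := by
        intro hh; rw [hh, zero_smul] at ha'; exact hbne i ha'.symm
      have : ⟪b i, u⟫_ℂ = (starRingEnd ℂ) a' := by
        rw [← ha', inner_smul_left, inner_self_eq_norm_sq_to_K, hu]
        push_cast; ring
      rw [horthu i hi] at this
      exact ha'ne (by simpa using this.symm)
  -- the spectral gap
  set S : Finset (Fin n) := Finset.univ.filter (fun i => i ≠ i0) with hSdef
  set γ : ℝ := if hS : S.Nonempty then S.inf' hS (fun i => ω - μ i) else 1 with hγdef
  have hγpos : 0 < γ := by
    rw [hγdef]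
    split_ifs with hS
    · rw [Finset.lt_inf'_iff]
      intro i hiS
      have hi : i ≠ i0 := by simpa [hSdef] using hiS
      linarith [hμlt i hi]
    · exact one_pos
  have hγle : ∀ i, i ≠ i0 → γ ≤ ω - μ i := by
    intro i hi
    have hiS : i ∈ S := by simp [hSdef, hi]
    rw [hγdef]
    rw [dif_pos ⟨i, hiS⟩]
    exact Finset.inf'_le _ hiS
  -- the projection P and the evolution B
  set P : H →L[ℂ] H := (innerSL ℂ u).smulRight u with hPdef
  have hPapp : ∀ x, P x = ⟪u, x⟫_ℂ • u := fun x => rfl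
  set B : ℝ → (H →L[ℂ] H) := fun t => Real.exp (-(t * ω)) • NormedSpace.exp (t • L)
    with hBdef
  have htL : ∀ (t : ℝ) (i : Fin n), (t • L) (b i) = ((t * μ i : ℝ) : ℂ) • b i := by
    intro t i
    rw [ContinuousLinearMap.smul_apply, hbev i, ← Complex.coe_smul, smul_smul]
    push_cast
    ring_nf
  have hBapp : ∀ (t : ℝ) (i : Fin n),
      B t (b i) = ((Real.exp (t * μ i - t * ω) : ℝ) : ℂ) • b i := by
    intro t i
    rw [hBdef]
    simp only [ContinuousLinearMap.smul_apply]
    rw [exp_eig (t • L) (b i) ((t * μ i : ℝ) : ℂ) (htL t i)]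
    rw [← Complex.ofReal_exp, ← Complex.coe_smul, smul_smul,
      ← Complex.ofReal_mul, ← Real.exp_add]
    ring_nf
  -- self-adjointness of exp (t • L)
  have hexp_sym : ∀ (t : ℝ) (x y : H), ⟪NormedSpace.exp (t • L) x, y⟫_ℂ
      = ⟪x, NormedSpace.exp (t • L) y⟫_ℂ := by
    intro t x y
    have h1 : IsSelfAdjoint (t • L) := by
      rw [ContinuousLinearMap.isSelfAdjoint_iff_isSymmetric]
      intro z w
      have := hL.isSymmetric z w
      simp only [ContinuousLinearMap.coe_coe, ContinuousLinearMap.coe_smul, Pi.smul_apply,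
        LinearMap.smul_apply, ContinuousLinearMap.smul_apply, ← Complex.coe_smul,
        inner_smul_left, inner_smul_right, Complex.conj_ofReal] at *
      rw [this]
    have h2 : IsSelfAdjoint (NormedSpace.exp (t • L)) := IsSelfAdjoint.exp h1
    have := h2.isSymmetric x y
    simpa using this
  have hBsym : ∀ (t : ℝ) (x y : H), ⟪B t x, y⟫_ℂ = ⟪x, B t y⟫_ℂ := by
    intro t x y
    simp only [hBdef, ContinuousLinearMap.smul_apply, ← Complex.coe_smul, inner_smul_left,
      inner_smul_right, Complex.conj_ofReal]
    exact congrArg _ (hexp_sym t x y)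
  set c : ℂ := ⟪u, M u⟫_ℂ with hcdef
  -- the key inner-product identity for B t - P
  have hkey : ∀ (t : ℝ) (i : Fin n) (x : H), ⟪b i, (B t - P) x⟫_ℂ
      = (if i = i0 then 0 else ((Real.exp (t * μ i - t * ω) : ℝ) : ℂ)) * ⟪b i, x⟫_ℂ := by
    intro t i x
    have hBt : ⟪b i, B t x⟫_ℂ = ((Real.exp (t * μ i - t * ω) : ℝ) : ℂ) * ⟪b i, x⟫_ℂ := by
      rw [← hBsym t (b i) x, hBapp t i, inner_smul_left, Complex.conj_ofReal]
    have hPt : ⟪b i, P x⟫_ℂ = ⟪u, x⟫_ℂ * ⟪b i, u⟫_ℂ := by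
      rw [hPapp, inner_smul_right]
    rw [ContinuousLinearMap.sub_apply, inner_sub_right, hBt, hPt]
    by_cases hi : i = i0
    · subst hi
      rw [if_pos rfl, hμi0]
      have hbi : ⟪b i, x⟫_ℂ = (starRingEnd ℂ) a * ⟪u, x⟫_ℂ := by
        rw [← ha, inner_smul_left]
      have hbu : ⟪b i, u⟫_ℂ = (starRingEnd ℂ) a := by
        rw [← ha, inner_smul_left, inner_self_eq_norm_sq_to_K, hu]
        push_cast; ring
      rw [hbi, hbu]
      simp only [sub_self, Real.exp_zero, Complex.ofReal_one, one_mul, zero_mul]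
      ring
    · rw [if_neg hi, horthu i hi, mul_zero, sub_zero]
  -- operator-norm bound on B t - P
  have hBP : ∀ t : ℝ, 0 ≤ t → ‖B t - P‖ ≤ Real.exp (-γ * t) := by
    intro t ht
    refine opnorm_bound b (B t - P) _ (hkey t) _ (Real.exp_nonneg _) ?_
    intro i
    by_cases hi : i = i0
    · simp [hi, Real.exp_nonneg]
    · rw [if_neg hi, Complex.norm_real, Real.norm_eq_abs, abs_of_pos (Real.exp_pos _)]
      apply Real.exp_le_exp.mpr
      have := hγle i hi
      nlinarith
  -- norm of P
  have hP1 : ‖P‖ = 1 := by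
    apply le_antisymm
    · refine ContinuousLinearMap.opNorm_le_bound P zero_le_one (fun x => ?_)
      rw [hPapp, norm_smul, hu, mul_one, one_mul]
      exact (norm_inner_le_norm _ _).trans (by rw [hu, one_mul])
    · have h1 : P u = u := by
        rw [hPapp, inner_self_eq_norm_sq_to_K, hu]
        push_cast; simp
      have h2 := P.le_opNorm u
      rw [h1, hu, mul_one] at h2
      exact h2
  -- c is real and positive
  have hcconj : (starRingEnd ℂ) c = c := by
    rw [hcdef, inner_conj_symm]
    have := hM.isSymmetric u u
    simpa using this
  have hcre : c = ((c.re : ℝ) : ℂ) := (Complex.conj_eq_iff_re.mp hcconj).symm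
  have hcpos : 0 < c.re := hMpos u hune
  have hnormc : ‖c‖ = c.re := by
    calc ‖c‖ = ‖((c.re : ℝ) : ℂ)‖ := by rw [← hcre]
      _ = |c.re| := by rw [Complex.norm_real, Real.norm_eq_abs]
      _ = c.re := abs_of_pos hcpos
  -- P M P = c • P
  have hPMP : P * M * P = c • P := by
    ext x
    simp only [ContinuousLinearMap.mul_apply, ContinuousLinearMap.smul_apply, hPapp,
      map_smul, inner_smul_right, smul_smul]
    rw [mul_comm]
  -- expressing the scaled evolution
  have hX : ∀ t : ℝ, Real.exp (-2 * t * ω) • E t = B t * M * B t := by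
    intro t
    have h1 : B t * M * B t = (Real.exp (-(t * ω)) * Real.exp (-(t * ω)))
        • (NormedSpace.exp (t • L) * M * NormedSpace.exp (t • L)) := by
      simp only [hBdef, smul_mul_assoc, mul_smul_comm, smul_smul]
    rw [h1, ← Real.exp_add, hE t]
    congr 1
    ring
  -- the main estimate
  have hdiff : ∀ t : ℝ, 0 ≤ t → ‖B t * M * B t - c • P‖ ≤ 3 * ‖M‖ * Real.exp (-γ * t) := by
    intro t ht
    have hsplit : B t * M * B t - c • P = (B t - P) * M * B t + P * M * (B t - P) := by
      rw [← hPMP]; noncomm_ring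
    rw [hsplit]
    have hd := hBP t ht
    have h3 : Real.exp (-γ * t) ≤ 1 := Real.exp_le_one_iff.mpr (by nlinarith)
    have hBnorm : ‖B t‖ ≤ 2 := by
      have h1 : ‖B t‖ = ‖P + (B t - P)‖ := by congr 1; abel
      have h2 := norm_add_le P (B t - P)
      rw [← h1, hP1] at h2
      linarith
    have hA1 : ‖(B t - P) * M * B t‖ ≤ ‖B t - P‖ * ‖M‖ * ‖B t‖ :=
      (norm_mul_le _ _).trans (mul_le_mul_of_nonneg_right (norm_mul_le _ _) (norm_nonneg _))
    have hA2 : ‖P * M * (B t - P)‖ ≤ ‖P‖ * ‖M‖ * ‖B t - P‖ :=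
      (norm_mul_le _ _).trans (mul_le_mul_of_nonneg_right (norm_mul_le _ _) (norm_nonneg _))
    have e0 : (0:ℝ) ≤ Real.exp (-γ * t) := Real.exp_nonneg _
    have hM0 : (0:ℝ) ≤ ‖M‖ := norm_nonneg _
    have hb0 : (0:ℝ) ≤ ‖B t - P‖ := norm_nonneg _
    have hBt0 : (0:ℝ) ≤ ‖B t‖ := norm_nonneg _
    calc ‖(B t - P) * M * B t + P * M * (B t - P)‖
        ≤ ‖(B t - P) * M * B t‖ + ‖P * M * (B t - P)‖ := norm_add_le _ _
      _ ≤ 3 * ‖M‖ * Real.exp (-γ * t) := by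
          rw [hP1] at hA2
          nlinarith [mul_le_mul_of_nonneg_left hBnorm (mul_nonneg hb0 hM0),
            mul_le_mul_of_nonneg_right hd hM0]
  constructor
  · -- convergence
    have htend0 : Tendsto (fun t : ℝ => 3 * ‖M‖ * Real.exp (-γ * t)) atTop (nhds 0) := by
      have h2 : Tendsto (fun t : ℝ => γ * t) atTop atTop :=
        Tendsto.const_mul_atTop hγpos tendsto_id
      have h3 : Tendsto (fun t : ℝ => -(γ * t)) atTop atBot := tendsto_neg_atBot_iff.mpr h2
      have h1 : Tendsto (fun t : ℝ => -γ * t) atTop atBot := by simpa [neg_mul] using h3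
      have h4 : Tendsto (fun t : ℝ => Real.exp (-γ * t)) atTop (nhds 0) :=
        Real.tendsto_exp_atBot.comp h1
      simpa using h4.const_mul (3 * ‖M‖)
    rw [← tendsto_sub_nhds_zero_iff]
    refine squeeze_zero_norm' ?_ htend0
    filter_upwards [eventually_ge_atTop (0:ℝ)] with t ht
    rw [hX t]
    exact hdiff t ht
  · refine ⟨3 * ‖M‖, γ, hγpos, fun t ht => ?_⟩
    have h1 : ‖c • P‖ = c.re := by rw [norm_smul, hP1, mul_one, hnormc]
    have h2 := abs_norm_sub_norm_le (Real.exp (-2 * t * ω) • E t) (c • P)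
    rw [h1] at h2
    calc |‖Real.exp (-2 * t * ω) • E t‖ - c.re|
        ≤ ‖Real.exp (-2 * t * ω) • E t - c • P‖ := h2
      _ ≤ 3 * ‖M‖ * Real.exp (-γ * t) := by rw [hX t]; exact hdiff t ht
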